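/- Let R be an integral domain, M a torsion-free R-module, and A ≤ M a submodule such that M/A is torsion-free. If A is a direct summand of every submodule D of M with A ≤ D ≤ M and D/A of rank 1, then A is balanced in M. -/

import Mathlib

open DirectSum Cardinal

universe u v w

variable (R : Type u) [CommRing R] [IsDomain R]

/-- A submodule `N` of `M` is *pure* if every finite system of `R`-linear equations with
constants in `N` that is solvable in `M` is solvable in `N`. -/
def IsPureSub {M : Type v} [AddCommGroup M] [Module R M] (N : Submodule R M) : Prop :=
  ∀ (n m : ℕ) (r : Fin n → Fin m → R) (a : Fin n → M),
    (∀ i, a i ∈ N) →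
    (∃ x : Fin m → M, ∀ i, ∑ j, r i j • x j = a i) →
    (∃ y : Fin m → M, (∀ j, y j ∈ N) ∧ ∀ i, ∑ j, r i j • y j = a i)

/-- A submodule `A ≤ B` is *balanced* if `B/A` is torsion-free and every rank-1
torsion-free module has the projective property w.r.t. `0 → A → B → B/A → 0`. -/
def IsBalanced {B : Type v} [AddCommGroup B] [Module R B] (A : Submodule R B) : Prop :=
  NoZeroSMulDivisors R (B ⧸ A) ∧
  ∀ (J : Type w) [AddCommGroup J] [Module R J], NoZeroSMulDivisors R J →
    Module.rank R J = 1 →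
    ∀ φ : J →ₗ[R] B ⧸ A, ∃ ψ : J →ₗ[R] B, A.mkQ ∘ₗ ψ = φ

/-- `M` is isomorphic to a direct sum of ideals of `R`. -/
def IsDirectSumOfIdeals (M : Type v) [AddCommGroup M] [Module R M] : Prop :=
  ∃ (ι : Type w) (I : ι → Ideal R), Nonempty (M ≃ₗ[R] ⨁ i, ↥(I i))

/-- `R` is an h-local domain. -/
def IsHLocal : Prop :=
  (∀ P : Ideal R, P.IsPrime → P ≠ ⊥ → ∃! m : Ideal R, m.IsMaximal ∧ P ≤ m) ∧
  (∀ r : R, r ≠ 0 → {m : Ideal R | m.IsMaximal ∧ r ∈ m}.Finite)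

/-- `R` is a Prüfer domain: finitely generated ideals are projective. -/
def IsPruefer : Prop := ∀ I : Ideal R, I.FG → Module.Projective R ↥I

/-- A `G(ℵ₀)`-family of submodules of `M`. -/
def IsGAleph0Family {M : Type v} [AddCommGroup M] [Module R M]
    (𝓑 : Set (Submodule R M)) : Prop :=
  ⊥ ∈ 𝓑 ∧ ⊤ ∈ 𝓑 ∧
  (∀ c ⊆ 𝓑, c.Nonempty → IsChain (· ≤ ·) c → sSup c ∈ 𝓑) ∧
  (∀ A₀ ∈ 𝓑, ∀ H : Set M, H.Countable →
    ∃ A ∈ 𝓑, A₀ ≤ A ∧ H ⊆ (A : Set M) ∧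
      ∃ S : Set M, S.Countable ∧ S ⊆ (A : Set M) ∧ A ≤ A₀ ⊔ Submodule.span R S)

/-- if `A ≤ M` with `M/A` torsion-free is a direct summand of every
intermediate submodule `D` with `D/A` of rank 1, then `A` is balanced in `M`. -/
theorem stmt14 {M : Type v} [AddCommGroup M] [Module R M] [NoZeroSMulDivisors R M]
    (A : Submodule R M) (htf : NoZeroSMulDivisors R (M ⧸ A))
    (hsum : ∀ D : Submodule R M, A ≤ D →
      Module.rank R (↥D ⧸ A.comap D.subtype) = 1 →
      ∃ C : Submodule R ↥D, IsCompl (A.comap D.subtype) C) :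
    IsBalanced R A := by
  refine ⟨htf, fun J _ _ hJtf hJrank φ => ?_⟩
  by_cases h1 : Module.rank R ↥(LinearMap.range φ) = 1
  · -- the range has rank 1
    set D : Submodule R M := Submodule.comap A.mkQ (LinearMap.range φ) with hD
    have hAD : A ≤ D := by
      intro x hx
      simp only [hD, Submodule.mem_comap]
      have : A.mkQ x = 0 := by
        simpa [Submodule.mkQ_apply, Submodule.Quotient.mk_eq_zero] using hx
      rw [this]; exact zero_mem _
    set f : ↥D →ₗ[R] M ⧸ A := A.mkQ ∘ₗ D.subtype with hf
    have hker : LinearMap.ker f = A.comap D.subtype := by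
      ext x
      simp [hf, Submodule.Quotient.mk_eq_zero]
    have hrange : LinearMap.range f = LinearMap.range φ := by
      apply le_antisymm
      · rintro y ⟨x, rfl⟩
        exact x.2
      · rintro y hy
        obtain ⟨m, rfl⟩ := A.mkQ_surjective y
        exact ⟨⟨m, by simpa [hD] using hy⟩, rfl⟩
    let e2 : (↥D ⧸ LinearMap.ker f) ≃ₗ[R] ↥(LinearMap.range f) := f.quotKerEquivRange
    have hqrank : Module.rank R (↥D ⧸ A.comap D.subtype) = 1 := by
      rw [← hker, e2.rank_eq, hrange, h1]
    obtain ⟨C, hC⟩ := hsum D hAD hqrank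
    rw [← hker] at hC
    let e1 : (↥D ⧸ LinearMap.ker f) ≃ₗ[R] ↥C :=
      Submodule.quotientEquivOfIsCompl (LinearMap.ker f) C hC
    have hmem : ∀ x : J, φ x ∈ LinearMap.range f := by
      intro x; rw [hrange]; exact LinearMap.mem_range_self φ x
    let φ' : J →ₗ[R] ↥(LinearMap.range f) := φ.codRestrict _ hmem
    refine ⟨D.subtype ∘ₗ C.subtype ∘ₗ e1.toLinearMap ∘ₗ e2.symm.toLinearMap ∘ₗ φ', ?_⟩
    ext x
    set c : ↥C := e1 (e2.symm (φ' x)) with hc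
    have h3 : (Submodule.Quotient.mk (↑c : ↥D) : ↥D ⧸ LinearMap.ker f) = e2.symm (φ' x) := by
      rw [hc]
      exact Submodule.mk_quotientEquivOfIsCompl_apply hC _
    have h4 : f ↑c = φ x := by
      have := f.quotKerEquivRange_apply_mk (↑c : ↥D)
      rw [h3] at this
      rw [← this, show f.quotKerEquivRange = e2 from rfl, LinearEquiv.apply_symm_apply]
      rfl
    exact h4
  · -- the range has rank 0, hence is trivial
    have hle : Module.rank R ↥(LinearMap.range φ) ≤ 1 := by
      have e : (J ⧸ LinearMap.ker φ) ≃ₗ[R] ↥(LinearMap.range φ) := φ.quotKerEquivRange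
      have h5 := e.symm.lift_rank_eq
      have h6 : Module.rank R (J ⧸ LinearMap.ker φ) ≤ 1 := by
        rw [← hJrank]; exact rank_quotient_le _
      have h7 := h5.le.trans (Cardinal.lift_le.mpr h6)
      rw [Cardinal.lift_one] at h7
      exact Cardinal.lift_le_one_iff.mp h7
    have h0 : Module.rank R ↥(LinearMap.range φ) = 0 := by
      rcases (Cardinal.lt_one_iff_zero).mp (lt_of_le_of_ne hle h1) with h
      exact h
    have hbot : ∀ x : J, φ x = 0 := by
      intro x
      have := rank_eq_zero_iff.mp h0 ⟨φ x, LinearMap.mem_range_self φ x⟩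
      obtain ⟨a, ha, hax⟩ := this
      have : a • φ x = 0 := by
        have := congrArg (Subtype.val) hax
        simpa using this
      rcases smul_eq_zero.mp this with h | h
      · exact absurd h ha
      · exact h
    refine ⟨0, ?_⟩
    ext x
    simp [hbot x]
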